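/- Let A be a symmetric n×n matrix over F₂. Then A has rank one and trace zero if and only if there exist a permutation matrix Q ∈ GL_n(F₂) and an even integer k with 2 ≤ k ≤ n such that A = Q · diag(J_{k×k}, 0) · Qᵀ, where J_{k×k} is the k×k all-ones matrix. -/

import Mathlib

open Matrix

namespace RankOneAux

variable {n : ℕ}

lemma zmod2_mul_self : ∀ x : ZMod 2, x * x = x := by decide

lemma zmod2_eq_zero_or_one : ∀ x : ZMod 2, x = 0 ∨ x = 1 := by decide

/-- conjugation by a permutation matrix is a submatrix -/
lemma perm_conj (σ : Equiv.Perm (Fin n)) (M : Matrix (Fin n) (Fin n) (ZMod 2)) :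
    σ.permMatrix (ZMod 2) * M * (σ.permMatrix (ZMod 2))ᵀ = M.submatrix σ σ := by
  have h2 : (σ.permMatrix (ZMod 2))ᵀ = (σ.symm).toPEquiv.toMatrix := by
    rw [Equiv.toPEquiv_symm, PEquiv.toMatrix_symm]
  rw [Equiv.Perm.permMatrix, PEquiv.toMatrix_toPEquiv_mul, h2, PEquiv.mul_toMatrix_toPEquiv]
  ext i j
  simp

lemma rank_outer {v : Fin n → ZMod 2} (hv : v ≠ 0) :
    (Matrix.of fun i j => v i * v j : Matrix (Fin n) (Fin n) (ZMod 2)).rank = 1 := by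
  set M : Matrix (Fin n) (Fin n) (ZMod 2) := Matrix.of fun i j => v i * v j with hM
  obtain ⟨j0, hj0⟩ : ∃ j, v j ≠ 0 := by
    by_contra h; push_neg at h; exact hv (funext fun j => h j)
  have hvj : v j0 = 1 := (zmod2_eq_zero_or_one (v j0)).resolve_left hj0
  have hrange : LinearMap.range M.mulVecLin = Submodule.span (ZMod 2) {v} := by
    apply le_antisymm
    · rintro x ⟨y, rfl⟩
      have : M.mulVec y = (∑ j, v j * y j) • v := by
        ext i
        simp only [hM, Matrix.mulVec, dotProduct, Matrix.of_apply, Pi.smul_apply, smul_eq_mul, mul_assoc]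
        rw [Finset.sum_mul]
        exact Finset.sum_congr rfl fun x _ => (mul_comm _ _)
      rw [Matrix.mulVecLin_apply, this]
      exact Submodule.smul_mem _ _ (Submodule.mem_span_singleton_self v)
    · rw [Submodule.span_singleton_le_iff_mem]
      refine ⟨Pi.single j0 1, ?_⟩
      ext i
      simp [Matrix.mulVecLin_apply, Matrix.mulVec_single, hM, hvj]
  rw [Matrix.rank, hrange, finrank_span_singleton hv]

lemma entry_mul {A : Matrix (Fin n) (Fin n) (ZMod 2)} (hr : A.rank = 1)
    (hAs : A.IsSymm) (i j : Fin n) : A i j = A i i * A j j := by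
  set f : Fin 2 → Fin n := ![i, j] with hf
  set P : Matrix (Fin 2) (Fin n) (ZMod 2) := Matrix.of fun a l => if l = f a then 1 else 0 with hP
  have hPA : P * A = A.submatrix f id := by
    ext a b
    simp [hP, Matrix.mul_apply, ite_mul]
  have hAPt : ∀ (B : Matrix (Fin 2) (Fin n) (ZMod 2)), B * Pᵀ = B.submatrix id f := by
    intro B
    ext a b
    simp [hP, Matrix.mul_apply, mul_ite]
  have hB : P * A * Pᵀ = A.submatrix f f := by
    rw [hPA, hAPt]; ext a b; simp
  have hrank : (A.submatrix f f).rank ≤ 1 := by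
    rw [← hB]
    calc (P * A * Pᵀ).rank ≤ (P * A).rank := Matrix.rank_mul_le_left _ _
      _ ≤ A.rank := Matrix.rank_mul_le_right _ _
      _ = 1 := hr
  have hdet : (A.submatrix f f).det = 0 := by
    by_contra hd
    have : IsUnit (A.submatrix f f) :=
      (Matrix.isUnit_iff_isUnit_det _).2 (isUnit_iff_ne_zero.2 hd)
    have := Matrix.rank_of_isUnit _ this
    rw [this] at hrank
    simp [Fintype.card_fin] at hrank
  rw [Matrix.det_fin_two] at hdet
  have hsub : ∀ a b, A.submatrix f f a b = A (f a) (f b) := fun _ _ => rfl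
  simp only [hsub] at hdet
  have hf0 : f 0 = i := rfl
  have hf1 : f 1 = j := rfl
  rw [hf0, hf1] at hdet
  have hji : A j i = A i j := hAs.apply i j
  rw [hji, zmod2_mul_self] at hdet
  have := sub_eq_zero.mp hdet
  exact this.symm

def finLtEquiv {k : ℕ} (hkn : k ≤ n) : {i : Fin n // (i : ℕ) < k} ≃ Fin k where
  toFun x := ⟨x.1.1, x.2⟩
  invFun y := ⟨⟨y.1, lt_of_lt_of_le y.2 hkn⟩, y.2⟩
  left_inv x := rfl
  right_inv y := rfl

lemma card_lt_subtype {k : ℕ} (hkn : k ≤ n) :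
    Fintype.card {i : Fin n // (i : ℕ) < k} = k := by
  rw [Fintype.card_congr (finLtEquiv hkn), Fintype.card_fin]

lemma card_filter_lt {k : ℕ} (hkn : k ≤ n) :
    (Finset.univ.filter (fun i : Fin n => (i : ℕ) < k)).card = k := by
  rw [← Fintype.card_subtype, card_lt_subtype hkn]

end RankOneAux

open RankOneAux in
/-- A symmetric matrix over `F₂` has rank one and trace zero iff it equals
`Q * diag(J_{k×k}, 0) * Qᵀ` for a permutation matrix `Q` and an even `k` with `2 ≤ k ≤ n`. -/
theorem rank_one_trace_zero_iff {n : ℕ} (A : Matrix (Fin n) (Fin n) (ZMod 2))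
    (hAs : A.IsSymm) :
    (A.rank = 1 ∧ A.trace = 0) ↔
      ∃ (σ : Equiv.Perm (Fin n)) (k : ℕ), Even k ∧ 2 ≤ k ∧ k ≤ n ∧
        A = σ.permMatrix (ZMod 2) *
            Matrix.of (fun i j : Fin n => if (i : ℕ) < k ∧ (j : ℕ) < k then (1 : ZMod 2) else 0) *
            (σ.permMatrix (ZMod 2))ᵀ := by
  constructor
  · rintro ⟨hr, ht⟩
    classical
    have hmul := RankOneAux.entry_mul hr hAs
    set q : Fin n → Prop := fun i => A i i = 1 with hq
    set k := Fintype.card {i // q i} with hk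
    have hkn : k ≤ n := by simpa using Fintype.card_subtype_le q
    have hval : ∀ i, A i i = if q i then 1 else 0 := by
      intro i
      by_cases h : q i
      · rw [if_pos h]; exact h
      · rw [if_neg h]; exact (zmod2_eq_zero_or_one _).resolve_right h
    have htrace : A.trace = (k : ZMod 2) := by
      rw [Matrix.trace]
      have : ∀ i, A.diag i = if q i then 1 else 0 := fun i => hval i
      rw [Finset.sum_congr rfl fun i _ => this i, Finset.sum_boole,
        hk, Fintype.card_subtype]
    have hdvd : (2 : ℕ) ∣ k := by
      rwa [htrace, ZMod.natCast_eq_zero_iff] at ht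
    have hkeven : Even k := even_iff_two_dvd.mpr hdvd
    have hk0 : k ≠ 0 := by
      intro h0
      have hempty : ∀ i, ¬ q i := by
        intro i hi
        have : 0 < Fintype.card {i // q i} := Fintype.card_pos_iff.mpr ⟨⟨i, hi⟩⟩
        omega
      have hA0 : A = 0 := by
        ext i j
        have h1 : A i i = 0 := (zmod2_eq_zero_or_one _).resolve_right (hempty i)
        rw [hmul i j, h1, zero_mul, Matrix.zero_apply]
      rw [hA0, Matrix.rank_zero] at hr
      exact absurd hr (by norm_num)
    have hk2 : 2 ≤ k := by omega
    have c1 : Fintype.card {i : Fin n // (i : ℕ) < k} = k := card_lt_subtype hkn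
    have e' : {i // q i} ≃ {i : Fin n // (i : ℕ) < k} := Fintype.equivOfCardEq (by rw [c1])
    have f' : {i // ¬ q i} ≃ {i : Fin n // ¬ (i : ℕ) < k} := Fintype.equivOfCardEq (by
      rw [Fintype.card_subtype_compl, Fintype.card_subtype_compl, c1])
    set σ := Equiv.subtypeCongr e' f' with hσ
    have hσp : ∀ i, ((σ i : Fin n) : ℕ) < k ↔ q i := by
      intro i
      by_cases h : q i
      · have hs : σ i = (e' ⟨i, h⟩ : Fin n) := by simp [hσ, Equiv.subtypeCongr, Equiv.sumCompl_symm_apply_of_pos h]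
        rw [hs]
        exact iff_of_true (e' ⟨i, h⟩).2 h
      · have hs : σ i = (f' ⟨i, h⟩ : Fin n) := by simp [hσ, Equiv.subtypeCongr, Equiv.sumCompl_symm_apply_of_neg h]
        rw [hs]
        exact iff_of_false (f' ⟨i, h⟩).2 h
    refine ⟨σ, k, hkeven, hk2, hkn, ?_⟩
    rw [perm_conj]
    ext i j
    rw [Matrix.submatrix_apply, Matrix.of_apply, hmul i j, hval i, hval j]
    simp only [hσp]
    rcases Classical.em (q i) with hi | hi <;> rcases Classical.em (q j) with hj | hj
    · rw [if_pos hi, if_pos hj, if_pos ⟨hi, hj⟩, one_mul]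
    · rw [if_pos hi, if_neg hj, if_neg (fun h => hj h.2), mul_zero]
    · rw [if_neg hi, if_pos hj, if_neg (fun h => hi h.1), zero_mul]
    · rw [if_neg hi, if_neg hj, if_neg (fun h => hi h.1), zero_mul]
  · rintro ⟨σ, k, hkeven, hk2, hkn, hA⟩
    classical
    have hnpos : 0 < n := lt_of_lt_of_le (by omega) hkn
    set v : Fin n → ZMod 2 := fun i => if ((σ i : Fin n) : ℕ) < k then 1 else 0 with hv
    have hAv : A = Matrix.of fun i j => v i * v j := by
      rw [hA, perm_conj]
      ext i j
      rw [Matrix.submatrix_apply, Matrix.of_apply, Matrix.of_apply]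
      by_cases h1 : ((σ i : Fin n) : ℕ) < k <;>
        by_cases h2 : ((σ j : Fin n) : ℕ) < k <;> simp [hv, h1, h2]
    have hvne : v ≠ 0 := by
      intro h
      have h1 := congrFun h (σ.symm ⟨0, hnpos⟩)
      have h0 : ((σ (σ.symm ⟨0, hnpos⟩) : Fin n) : ℕ) < k := by
        rw [Equiv.apply_symm_apply]
        exact lt_of_lt_of_le (by norm_num) hk2
      rw [hv] at h1
      simp only [h0, if_pos, Pi.zero_apply] at h1
      exact one_ne_zero h1
    constructor
    · rw [hAv]; exact rank_outer hvne
    · rw [hAv, Matrix.trace]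
      have hdiag : ∀ i, (Matrix.of fun i j => v i * v j).diag i = v i :=
        fun i => zmod2_mul_self (v i)
      rw [Finset.sum_congr rfl fun i _ => hdiag i]
      have hsum : ∑ i, v i = ∑ i : Fin n, (if (i : ℕ) < k then (1 : ZMod 2) else 0) :=
        Equiv.sum_comp σ (fun j : Fin n => if (j : ℕ) < k then (1 : ZMod 2) else 0)
      rw [hsum, Finset.sum_boole, card_filter_lt hkn, ZMod.natCast_eq_zero_iff]
      exact hkeven.two_dvd
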